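/- Let ν be a finite nonnegative Borel measure on ℝ^d satisfying ν(B(x,δ)) ≤ C δ^γ for all x, δ, with 0 < γ ≤ d, and let K_ρ(x) = |x|^{−ρ}χ_{B(0,R)}(x). Then for every p ∈ [1,∞] and every ε > 0, taking ρ = γ + (d−γ)/p − ε, the convolution ν ∗ K_ρ belongs to L^p(ℝ^d). -/

import Mathlib

open MeasureTheory Metric Set
open scoped ENNReal

open Module

noncomputable section

abbrev Euc (d : ℕ) := EuclideanSpace ℝ (Fin d)

/-- The truncated Riesz kernel `K_ρ(x) = |x|^{-ρ} χ_{B(0,R)}(x)`. -/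
def trKer (d : ℕ) (ρ R : ℝ) (x : Euc d) : ℝ :=
  (Metric.ball (0 : Euc d) R).indicator (fun z => ‖z‖ ^ (-ρ)) x

lemma trKer_nonneg (d : ℕ) (ρ R : ℝ) (x : Euc d) : 0 ≤ trKer d ρ R x := by
  unfold trKer
  by_cases h : x ∈ Metric.ball (0 : Euc d) R <;>
    simp [h, Real.rpow_nonneg (norm_nonneg x)]

lemma measurable_trKer (d : ℕ) (ρ R : ℝ) : Measurable (trKer d ρ R) := by
  unfold trKer
  exact (measurable_norm.pow_const _).indicator measurableSet_ball

lemma kerBound (d : ℕ) (μ : Measure (Euc d)) (C γ ρ₀ R : ℝ) (hC : 0 ≤ C)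
    (hγ : 0 < γ) (hρ₀γ : ρ₀ < γ) (hR : 0 < R)
    (hf : ∀ (x : Euc d) (δ : ℝ), 0 < δ → μ (Metric.ball x δ) ≤ ENNReal.ofReal (C * δ ^ γ)) :
    ∃ M : ℝ≥0∞, M ≠ ∞ ∧ ∀ x : Euc d,
      ∫⁻ y, ENNReal.ofReal (trKer d ρ₀ R (x - y)) ∂μ ≤ M := by
  by_cases hρ : ρ₀ ≤ 0
  · -- bounded kernel case
    refine ⟨ENNReal.ofReal (R ^ (-ρ₀)) * ENNReal.ofReal (C * R ^ γ), by finiteness, fun x => ?_⟩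
    have hpt : ∀ y : Euc d, ENNReal.ofReal (trKer d ρ₀ R (x - y)) ≤
        (Metric.ball x R).indicator (fun _ => ENNReal.ofReal (R ^ (-ρ₀))) y := by
      intro y
      by_cases hy : y ∈ Metric.ball x R
      · simp only [indicator_of_mem hy]
        apply ENNReal.ofReal_le_ofReal
        unfold trKer
        by_cases hz : x - y ∈ Metric.ball (0 : Euc d) R
        · rw [indicator_of_mem hz]
          have hzn : ‖x - y‖ ≤ R := by
            have := mem_ball_iff_norm.mp hz
            simpa using this.le
          exact Real.rpow_le_rpow (norm_nonneg _) hzn (by linarith)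
        · rw [indicator_of_notMem hz]
          positivity
      · have hz : x - y ∉ Metric.ball (0 : Euc d) R := by
          intro hmem
          apply hy
          have : ‖x - y‖ < R := by simpa using mem_ball_iff_norm.mp hmem
          rw [mem_ball, dist_comm, dist_eq_norm]
          exact this
        simp [trKer, indicator_of_notMem hz, indicator_of_notMem hy]
    calc ∫⁻ y, ENNReal.ofReal (trKer d ρ₀ R (x - y)) ∂μ
        ≤ ∫⁻ y, (Metric.ball x R).indicator (fun _ => ENNReal.ofReal (R ^ (-ρ₀))) y ∂μ :=
          lintegral_mono hpt
      _ = ENNReal.ofReal (R ^ (-ρ₀)) * μ (Metric.ball x R) := by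
          rw [lintegral_indicator measurableSet_ball, setLIntegral_const]
      _ ≤ ENNReal.ofReal (R ^ (-ρ₀)) * ENNReal.ofReal (C * R ^ γ) := by
          gcongr
          exact hf x R hR
  · push_neg at hρ
    -- dyadic annuli
    set a : ℝ := 2⁻¹ with ha
    have ha0 : (0:ℝ) < a := by norm_num [ha]
    have ha1 : a < 1 := by norm_num [ha]
    set r : ℕ → ℝ := fun j => R * a ^ j with hr
    have hrpos : ∀ j, 0 < r j := fun j => by positivity
    set c : ℕ → ℝ≥0∞ := fun j => ENNReal.ofReal ((r (j + 1)) ^ (-ρ₀)) with hc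
    set q : ℝ := a ^ (γ - ρ₀) with hq
    have hq0 : 0 < q := Real.rpow_pos_of_pos ha0 _
    have hq1 : q < 1 := Real.rpow_lt_one ha0.le ha1 (by linarith)
    set A : ℝ := C * R ^ (γ - ρ₀) * a ^ (-ρ₀) with hA
    have hA0 : 0 ≤ A := by positivity
    refine ⟨ENNReal.ofReal A * (1 - ENNReal.ofReal q)⁻¹, ?_, fun x => ?_⟩
    · apply ENNReal.mul_ne_top ENNReal.ofReal_ne_top
      rw [ENNReal.inv_ne_top]
      exact (tsub_pos_of_lt (ENNReal.ofReal_lt_one.mpr hq1)).ne'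
    have hpt : ∀ y : Euc d, ENNReal.ofReal (trKer d ρ₀ R (x - y)) ≤
        ∑' j : ℕ, (Metric.ball x (r j)).indicator (fun _ => c j) y := by
      intro y
      by_cases hz : x - y ∈ Metric.ball (0 : Euc d) R
      · have hnz : ‖x - y‖ < R := by simpa using mem_ball_iff_norm.mp hz
        by_cases h0 : ‖x - y‖ = 0
        · have : trKer d ρ₀ R (x - y) = 0 := by
            unfold trKer
            rw [indicator_of_mem hz, h0, Real.zero_rpow (by linarith)]
          simp [this]
        · have hpos : 0 < ‖x - y‖ := lt_of_le_of_ne (norm_nonneg _) (Ne.symm h0)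
          have hex : ∃ n : ℕ, r (n + 1) ≤ ‖x - y‖ := by
            obtain ⟨n, hn⟩ := exists_pow_lt_of_lt_one (div_pos hpos hR) ha1
            exact ⟨n, by
              have : R * a ^ (n + 1) ≤ R * a ^ n := by
                apply mul_le_mul_of_nonneg_left _ hR.le
                exact pow_le_pow_of_le_one ha0.le ha1.le (Nat.le_succ n)
              refine le_trans this (le_of_lt ?_)
              rw [mul_comm]
              exact (lt_div_iff₀ hR).mp hn⟩
          classical
          set n := Nat.find hex with hn
          have h1 : r (n + 1) ≤ ‖x - y‖ := Nat.find_spec hex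
          have h2 : ‖x - y‖ < r n := by
            rcases Nat.eq_zero_or_pos n with h | h
            · rw [h]; simpa [hr] using hnz
            · obtain ⟨m, hm⟩ := Nat.exists_eq_succ_of_ne_zero h.ne'
              have := Nat.find_min hex (m := m) (by omega)
              push_neg at this
              rw [hm]
              exact this
          have hmem : y ∈ Metric.ball x (r n) := by
            rw [mem_ball, dist_comm, dist_eq_norm]
            exact h2
          have hker : ENNReal.ofReal (trKer d ρ₀ R (x - y)) ≤ c n := by
            apply ENNReal.ofReal_le_ofReal
            unfold trKer
            rw [indicator_of_mem hz]
            exact Real.rpow_le_rpow_of_nonpos (hrpos _) h1 (by linarith)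
          refine le_trans hker ?_
          have := ENNReal.le_tsum (f := fun j : ℕ =>
            (Metric.ball x (r j)).indicator (fun _ => c j) y) n
          rwa [indicator_of_mem hmem] at this
      · have : trKer d ρ₀ R (x - y) = 0 := by
          unfold trKer; rw [indicator_of_notMem hz]
        simp [this]
    have hterm : ∀ j : ℕ, c j * μ (Metric.ball x (r j)) ≤
        ENNReal.ofReal A * ENNReal.ofReal q ^ j := by
      intro j
      have hμ : μ (Metric.ball x (r j)) ≤ ENNReal.ofReal (C * (r j) ^ γ) :=
        hf x (r j) (hrpos j)
      calc c j * μ (Metric.ball x (r j))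
          ≤ ENNReal.ofReal ((r (j + 1)) ^ (-ρ₀)) * ENNReal.ofReal (C * (r j) ^ γ) := by
            gcongr
        _ = ENNReal.ofReal ((r (j + 1)) ^ (-ρ₀) * (C * (r j) ^ γ)) := by
            rw [← ENNReal.ofReal_mul (by positivity)]
        _ = ENNReal.ofReal (A * q ^ j) := by
            congr 1
            have e1 : (r (j + 1)) ^ (-ρ₀) = R ^ (-ρ₀) * a ^ (((j:ℝ) + 1) * (-ρ₀)) := by
              rw [hr]
              rw [Real.mul_rpow hR.le (by positivity)]
              congr 1
              rw [← Real.rpow_natCast a (j + 1), ← Real.rpow_mul ha0.le]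
              push_cast
              ring_nf
            have e2 : (r j) ^ γ = R ^ γ * a ^ ((j:ℝ) * γ) := by
              rw [hr]
              rw [Real.mul_rpow hR.le (by positivity)]
              congr 1
              rw [← Real.rpow_natCast a j, ← Real.rpow_mul ha0.le]
            have e3 : (q : ℝ) ^ j = a ^ ((j:ℝ) * (γ - ρ₀)) := by
              rw [hq, ← Real.rpow_natCast (a ^ (γ - ρ₀)) j, ← Real.rpow_mul ha0.le]
              ring_nf
            rw [e1, e2, e3, hA,
              show (j:ℝ) * (γ - ρ₀) = (j:ℝ) * γ + (j:ℝ) * (-ρ₀) by ring,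
              show ((j:ℝ) + 1) * (-ρ₀) = (-ρ₀) + (j:ℝ) * (-ρ₀) by ring,
              show γ - ρ₀ = γ + (-ρ₀) by ring]
            simp only [Real.rpow_add ha0, Real.rpow_add hR]
            ring
        _ = ENNReal.ofReal A * ENNReal.ofReal q ^ j := by
            rw [ENNReal.ofReal_mul hA0, ENNReal.ofReal_pow hq0.le]
    calc ∫⁻ y, ENNReal.ofReal (trKer d ρ₀ R (x - y)) ∂μ
        ≤ ∫⁻ y, ∑' j : ℕ, (Metric.ball x (r j)).indicator (fun _ => c j) y ∂μ :=
          lintegral_mono hpt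
      _ = ∑' j : ℕ, ∫⁻ y, (Metric.ball x (r j)).indicator (fun _ => c j) y ∂μ :=
          lintegral_tsum (fun j => (measurable_const.indicator measurableSet_ball).aemeasurable)
      _ = ∑' j : ℕ, c j * μ (Metric.ball x (r j)) := by
          congr 1
          ext j
          rw [lintegral_indicator measurableSet_ball, setLIntegral_const]
      _ ≤ ∑' j : ℕ, ENNReal.ofReal A * ENNReal.ofReal q ^ j := ENNReal.tsum_le_tsum hterm
      _ = ENNReal.ofReal A * ∑' j : ℕ, ENNReal.ofReal q ^ j := ENNReal.tsum_mul_left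
      _ = ENNReal.ofReal A * (1 - ENNReal.ofReal q)⁻¹ := by rw [ENNReal.tsum_geometric]

lemma measurable_conv (d : ℕ) (ρ R : ℝ) (ν : Measure (Euc d)) [SFinite ν] :
    Measurable (fun x : Euc d => ∫⁻ y, ENNReal.ofReal (trKer d ρ R (x - y)) ∂ν) := by
  apply Measurable.lintegral_prod_right
  exact (ENNReal.measurable_ofReal.comp
    ((measurable_trKer d ρ R).comp (measurable_fst.sub measurable_snd)))

lemma l1Bound (d : ℕ) (ρ R : ℝ) (ν : Measure (Euc d)) [SFinite ν] :
    ∫⁻ x, (∫⁻ y, ENNReal.ofReal (trKer d ρ R (x - y)) ∂ν) ∂(volume : Measure (Euc d))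
      = ν Set.univ * ∫⁻ z, ENNReal.ofReal (trKer d ρ R z) ∂(volume : Measure (Euc d)) := by
  rw [lintegral_lintegral_swap]
  · have : ∀ y : Euc d, ∫⁻ x, ENNReal.ofReal (trKer d ρ R (x - y)) ∂(volume : Measure (Euc d))
        = ∫⁻ z, ENNReal.ofReal (trKer d ρ R z) ∂(volume : Measure (Euc d)) := fun y =>
      lintegral_sub_right_eq_self (fun z => ENNReal.ofReal (trKer d ρ R z)) y
    simp_rw [this]
    rw [lintegral_const]
    ring
  · exact (ENNReal.measurable_ofReal.comp
      ((measurable_trKer d ρ R).comp (measurable_fst.sub measurable_snd))).aemeasurable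

lemma volume_frostman (d : ℕ) (hd : 0 < d) (x : Euc d) (δ : ℝ) (hδ : 0 < δ) :
    (volume : Measure (Euc d)) (Metric.ball x δ)
      ≤ ENNReal.ofReal (((volume : Measure (Euc d)) (Metric.ball 0 1)).toReal * δ ^ ((d : ℕ) : ℝ)) := by
  haveI : Nonempty (Fin d) := ⟨⟨0, hd⟩⟩
  rw [Measure.addHaar_ball _ x hδ.le]
  rw [ENNReal.ofReal_mul (by positivity)]
  rw [mul_comm]
  gcongr
  · rw [ENNReal.ofReal_toReal measure_ball_lt_top.ne]
  · rw [← Real.rpow_natCast δ (finrank ℝ (Euc d))]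
    apply le_of_eq
    congr 1
    · norm_num [finrank_euclideanSpace]

lemma lintegral_trKer_vol (d : ℕ) (ρ₁ R : ℝ) :
    ∫⁻ z, ENNReal.ofReal (trKer d ρ₁ R z) ∂(volume : Measure (Euc d))
      = ∫⁻ y, ENNReal.ofReal (trKer d ρ₁ R (0 - y)) ∂(volume : Measure (Euc d)) := by
  simp_rw [zero_sub]
  exact ((Measure.measurePreserving_neg (volume : Measure (Euc d))).lintegral_comp
    (ENNReal.measurable_ofReal.comp (measurable_trKer d ρ₁ R))).symm

lemma nu_atomless (d : ℕ) (ν : Measure (Euc d)) (C γ : ℝ) (hγ : 0 < γ)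
    (hfrost : ∀ (x : Euc d) (δ : ℝ), 0 < δ →
      ν (Metric.ball x δ) ≤ ENNReal.ofReal (C * δ ^ γ)) (x : Euc d) :
    ν {x} = 0 := by
  have h : ∀ n : ℕ, ν {x} ≤ ENNReal.ofReal (C * (1 / (n + 1) : ℝ) ^ γ) := by
    intro n
    refine le_trans (measure_mono ?_) (hfrost x (1 / (n + 1)) (by positivity))
    intro z hz
    simp only [mem_singleton_iff] at hz
    subst hz
    exact mem_ball_self (by positivity)
  have ht : Filter.Tendsto (fun n : ℕ => ENNReal.ofReal (C * (1 / (n + 1) : ℝ) ^ γ))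
      Filter.atTop (nhds 0) := by
    rw [show (0 : ℝ≥0∞) = ENNReal.ofReal (C * (0:ℝ) ^ γ) by
      rw [Real.zero_rpow hγ.ne', mul_zero, ENNReal.ofReal_zero]]
    apply ENNReal.tendsto_ofReal
    apply Filter.Tendsto.const_mul
    have h0 : Filter.Tendsto (fun n : ℕ => (1 / (n + 1) : ℝ)) Filter.atTop (nhds 0) :=
      tendsto_one_div_add_atTop_nhds_zero_nat
    exact ((Real.continuousAt_rpow_const 0 γ (Or.inr hγ.le)).tendsto.comp h0)
  have := ge_of_tendsto ht (Filter.Eventually.of_forall h)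
  exact le_antisymm this (zero_le)

theorem stmt11 (d : ℕ) (hd : 0 < d) (ν : Measure (Euc d)) [IsFiniteMeasure ν]
    (C γ : ℝ) (hγ : 0 < γ) (hγd : γ ≤ d)
    (hfrost : ∀ (x : Euc d) (δ : ℝ), 0 < δ →
      ν (Metric.ball x δ) ≤ ENNReal.ofReal (C * δ ^ γ))
    (R : ℝ) (hR : 0 < R) (p : ℝ≥0∞) (hp : 1 ≤ p) (ε : ℝ) (hε : 0 < ε)
    (ρ : ℝ) (hρ : ρ = γ + ((d : ℝ) - γ) * (p⁻¹).toReal - ε) :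
    MemLp (fun x : Euc d => (∫⁻ y, ENNReal.ofReal (trKer d ρ R (x - y)) ∂ν).toReal)
      p volume := by
  -- WLOG the Frostman constant is nonnegative
  set C' : ℝ := max C 0 with hC'def
  have hC'0 : (0:ℝ) ≤ C' := le_max_right _ _
  have hfrost' : ∀ (x : Euc d) (δ : ℝ), 0 < δ →
      ν (Metric.ball x δ) ≤ ENNReal.ofReal (C' * δ ^ γ) := by
    intro x δ hδ
    refine le_trans (hfrost x δ hδ) (ENNReal.ofReal_le_ofReal ?_)
    exact mul_le_mul_of_nonneg_right (le_max_left _ _) (Real.rpow_nonneg hδ.le _)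
  set F : Euc d → ℝ≥0∞ := fun x => ∫⁻ y, ENNReal.ofReal (trKer d ρ R (x - y)) ∂ν with hF
  have hFmeas : Measurable F := measurable_conv d ρ R ν
  have hasm : AEStronglyMeasurable (fun x => (F x).toReal) volume :=
    hFmeas.ennreal_toReal.aestronglyMeasurable
  have henorm : ∀ x : Euc d, (‖(F x).toReal‖₊ : ℝ≥0∞) ≤ F x := by
    intro x
    rw [← enorm_eq_nnnorm, Real.enorm_eq_ofReal ENNReal.toReal_nonneg]
    exact ENNReal.ofReal_toReal_le
  -- Frostman data for the Lebesgue measure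
  set cd : ℝ := ((volume : Measure (Euc d)) (Metric.ball 0 1)).toReal with hcd
  have hvol : ∀ (x : Euc d) (δ : ℝ), 0 < δ →
      (volume : Measure (Euc d)) (Metric.ball x δ) ≤ ENNReal.ofReal (cd * δ ^ ((d:ℕ) : ℝ)) :=
    fun x δ hδ => volume_frostman d hd x δ hδ
  have hd' : (0:ℝ) < (d:ℝ) := by exact_mod_cast hd
  by_cases hptop : p = ⊤
  · -- L^∞ case
    subst hptop
    simp only [ENNReal.inv_top, ENNReal.toReal_zero, mul_zero, add_zero] at hρ
    obtain ⟨M, hM, hbd⟩ := kerBound d ν C' γ ρ R hC'0 hγ (by rw [hρ]; linarith) hR hfrost'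
    refine ⟨hasm, ?_⟩
    rw [eLpNorm_exponent_top]
    refine lt_of_le_of_lt (essSup_le_of_ae_le M (Filter.Eventually.of_forall fun x => ?_))
      hM.lt_top
    exact le_trans (henorm x) (hbd x)
  · -- p < ∞
    have hp0 : p ≠ 0 := by
      intro h; rw [h] at hp; exact absurd hp (by simp)
    have hpr1 : 1 ≤ p.toReal := by
      rw [← ENNReal.toReal_one]
      exact ENNReal.toReal_mono hptop hp
    have hθ : (p⁻¹).toReal = (p.toReal)⁻¹ := by
      rw [ENNReal.toReal_inv]
    by_cases hp1 : p = 1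
    · -- L^1 case
      subst hp1
      simp only [inv_one, ENNReal.toReal_one, mul_one] at hρ
      have hρd : ρ < (d:ℝ) := by rw [hρ]; linarith
      obtain ⟨M₁, hM₁, hbd₁⟩ := kerBound d volume cd ((d:ℕ):ℝ) ρ R ENNReal.toReal_nonneg
        hd' hρd hR hvol
      refine ⟨hasm, ?_⟩
      rw [eLpNorm_one_eq_lintegral_enorm]
      calc ∫⁻ x, (‖(F x).toReal‖₊ : ℝ≥0∞) ∂volume
          ≤ ∫⁻ x, F x ∂volume := lintegral_mono henorm
        _ = ν Set.univ * ∫⁻ z, ENNReal.ofReal (trKer d ρ R z) ∂volume := l1Bound d ρ R ν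
        _ ≤ ν Set.univ * M₁ := by
            gcongr
            rw [lintegral_trKer_vol]
            exact hbd₁ 0
        _ < ⊤ := ENNReal.mul_lt_top (measure_lt_top ν _) hM₁.lt_top
    · -- 1 < p < ∞ : interpolation
      have hp1' : 1 < p := lt_of_le_of_ne hp (Ne.symm hp1)
      have hpr : 1 < p.toReal := by
        rw [← ENNReal.toReal_one]
        exact ENNReal.toReal_strict_mono hptop hp1'
      set pr : ℝ := p.toReal with hprdef
      set θ : ℝ := pr⁻¹ with hθdef
      have hθ0 : 0 < θ := by positivity
      have hθ1 : θ < 1 := by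
        rw [hθdef]
        rw [inv_lt_one_iff₀]
        right; exact hpr
      set ρ₀ : ℝ := γ - ε with hρ₀def
      set ρ₁ : ℝ := (d:ℝ) - ε with hρ₁def
      have hsum : ρ = (1 - θ) * ρ₀ + θ * ρ₁ := by
        rw [hρ, hθ, hρ₀def, hρ₁def]; ring
      obtain ⟨M₀, hM₀, hbd₀⟩ := kerBound d ν C' γ ρ₀ R hC'0 hγ (by rw [hρ₀def]; linarith)
        hR hfrost'
      obtain ⟨M₁, hM₁, hbd₁⟩ := kerBound d volume cd ((d:ℕ):ℝ) ρ₁ R ENNReal.toReal_nonneg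
        hd' (by rw [hρ₁def]; linarith) hR hvol
      set G : Euc d → ℝ≥0∞ := fun x => ∫⁻ y, ENNReal.ofReal (trKer d ρ₁ R (x - y)) ∂ν with hG
      have hGmeas : Measurable G := measurable_conv d ρ₁ R ν
      have hGint : ∫⁻ x, G x ∂volume ≤ ν Set.univ * M₁ := by
        rw [hG]
        rw [l1Bound d ρ₁ R ν]
        gcongr
        rw [lintegral_trKer_vol]
        exact hbd₁ 0
      -- pointwise Hölder bound
      have key : ∀ x : Euc d, F x ≤ M₀ ^ (1 - θ) * (G x) ^ θ := by
        intro x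
        have hxne : ∀ᵐ y ∂ν, y ≠ x := by
          rw [Filter.Eventually]
          rw [show {y : Euc d | y ≠ x} = {x}ᶜ by ext y; simp]
          rw [mem_ae_iff, compl_compl]
          exact nu_atomless d ν C' γ hγ hfrost' x
        have hae : ∀ᵐ y ∂ν, ENNReal.ofReal (trKer d ρ R (x - y)) =
            (ENNReal.ofReal (trKer d ρ₀ R (x - y))) ^ (1 - θ) *
              (ENNReal.ofReal (trKer d ρ₁ R (x - y))) ^ θ := by
          filter_upwards [hxne] with y hy
          have hz0 : x - y ≠ 0 := sub_ne_zero.mpr (Ne.symm hy)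
          have hzn : 0 < ‖x - y‖ := norm_pos_iff.mpr hz0
          by_cases hz : x - y ∈ Metric.ball (0 : Euc d) R
          · unfold trKer
            rw [indicator_of_mem hz, indicator_of_mem hz, indicator_of_mem hz]
            rw [ENNReal.ofReal_rpow_of_pos (Real.rpow_pos_of_pos hzn _),
              ENNReal.ofReal_rpow_of_pos (Real.rpow_pos_of_pos hzn _),
              ← ENNReal.ofReal_mul (by positivity)]
            congr 1
            rw [← Real.rpow_mul (norm_nonneg _), ← Real.rpow_mul (norm_nonneg _),
              ← Real.rpow_add hzn]
            congr 1
            rw [hsum]; ring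
          · unfold trKer
            rw [indicator_of_notMem hz, indicator_of_notMem hz, indicator_of_notMem hz]
            rw [ENNReal.ofReal_zero, ENNReal.zero_rpow_of_pos (by linarith),
              ENNReal.zero_rpow_of_pos hθ0, mul_zero]
        have hconj : ((1 - θ)⁻¹).HolderConjugate θ⁻¹ :=
          Real.HolderConjugate.inv_inv (by linarith) hθ0 (by ring)
        have hf0 : AEMeasurable (fun y : Euc d =>
            (ENNReal.ofReal (trKer d ρ₀ R (x - y))) ^ (1 - θ)) ν :=
          ((ENNReal.measurable_ofReal.comp ((measurable_trKer d ρ₀ R).comp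
            (measurable_const.sub measurable_id))).pow_const _).aemeasurable
        have hg0 : AEMeasurable (fun y : Euc d =>
            (ENNReal.ofReal (trKer d ρ₁ R (x - y))) ^ θ) ν :=
          ((ENNReal.measurable_ofReal.comp ((measurable_trKer d ρ₁ R).comp
            (measurable_const.sub measurable_id))).pow_const _).aemeasurable
        have hH := ENNReal.lintegral_mul_le_Lp_mul_Lq ν hconj hf0 hg0
        have e0 : ∀ a : ℝ≥0∞, (a ^ (1 - θ)) ^ ((1 - θ)⁻¹ : ℝ) = a := fun a => by
          rw [← ENNReal.rpow_mul, mul_inv_cancel₀ (by linarith : (1:ℝ) - θ ≠ 0),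
            ENNReal.rpow_one]
        have e1 : ∀ a : ℝ≥0∞, (a ^ θ) ^ (θ⁻¹ : ℝ) = a := fun a => by
          rw [← ENNReal.rpow_mul, mul_inv_cancel₀ hθ0.ne', ENNReal.rpow_one]
        simp only [Pi.mul_apply, e0, e1, one_div, inv_inv] at hH
        calc F x = ∫⁻ y, (ENNReal.ofReal (trKer d ρ₀ R (x - y))) ^ (1 - θ) *
              (ENNReal.ofReal (trKer d ρ₁ R (x - y))) ^ θ ∂ν := lintegral_congr_ae hae
          _ ≤ (∫⁻ y, ENNReal.ofReal (trKer d ρ₀ R (x - y)) ∂ν) ^ (1 - θ) * (G x) ^ θ := hH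
          _ ≤ M₀ ^ (1 - θ) * (G x) ^ θ :=
              mul_le_mul' (ENNReal.rpow_le_rpow (hbd₀ x) (by linarith)) le_rfl
      refine ⟨hasm, ?_⟩
      rw [eLpNorm_eq_lintegral_rpow_enorm_toReal hp0 hptop]
      have hbound : ∫⁻ x, (‖(F x).toReal‖₊ : ℝ≥0∞) ^ pr ∂volume
          ≤ M₀ ^ ((1 - θ) * pr) * (ν Set.univ * M₁) := by
        calc ∫⁻ x, (‖(F x).toReal‖₊ : ℝ≥0∞) ^ pr ∂volume
            ≤ ∫⁻ x, (M₀ ^ (1 - θ) * (G x) ^ θ) ^ pr ∂volume := by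
              apply lintegral_mono
              intro x
              exact ENNReal.rpow_le_rpow (le_trans (henorm x) (key x)) (by positivity)
          _ = ∫⁻ x, M₀ ^ ((1 - θ) * pr) * G x ∂volume := by
              apply lintegral_congr
              intro x
              rw [ENNReal.mul_rpow_of_nonneg _ _ (by positivity), ← ENNReal.rpow_mul,
                ← ENNReal.rpow_mul, hθdef, inv_mul_cancel₀ (by positivity : pr ≠ 0),
                ENNReal.rpow_one]
          _ = M₀ ^ ((1 - θ) * pr) * ∫⁻ x, G x ∂volume := lintegral_const_mul _ hGmeas
          _ ≤ M₀ ^ ((1 - θ) * pr) * (ν Set.univ * M₁) := by gcongr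
      refine ENNReal.rpow_lt_top_of_nonneg (by positivity) ?_
      refine ne_of_lt (lt_of_le_of_lt hbound ?_)
      apply ENNReal.mul_lt_top
      · exact ENNReal.rpow_lt_top_of_nonneg
          (mul_nonneg (by linarith) (by positivity)) hM₀
      · exact ENNReal.mul_lt_top (measure_lt_top ν _) hM₁.lt_top
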